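/- For n = k^2 + k + 1, the permutation σ_k^1 (defined below) contains exactly 2k monotone increasing subsequences of length k+1 and exactly 1 decreasing subsequence of length k+1; in particular it achieves m_k(σ_k^1) = 2k+1 while containing monotone (k+1)-subsequences of both types. -/
import Mathlib


/-- The value at (0-indexed) position `p` of the permutation `σ_k^1` of `[k²+k+1]`:
the first row is `k²+1, k²−k, k²+2, …, k²+k+1`; then for `m = k−1` down to `2` the row
`2+(m−2)(k+1), (m−1)(k+1)+3, …, m(k+1)+1`; and the last row is `1, 3, 4, …, k+2`. -/
def sigmaOne (k p : ℕ) : ℕ :=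
  if p = 0 then k ^ 2 + 1
  else if p = 1 then k ^ 2 - k
  else if p ≤ k + 1 then k ^ 2 + p
  else
    let q := p - (k + 2)
    let m := k - 1 - q / (k + 1)
    let o := q % (k + 1)
    if o = 0 then (if m = 1 then 1 else 2 + (m - 2) * (k + 1))
    else if m = 1 then o + 2
    else (m - 1) * (k + 1) + 2 + o

namespace SigmaOneAux

/-- position of the i-th "special" element -/
def spec (k i : ℕ) : ℕ := if i = 0 then 0 else (i-1)*(k+1)+1
/-- position of the o-th element (1 ≤ o ≤ k) of run j -/
def runp (k j o : ℕ) : ℕ := if j = 0 then 1 + o else 1 + j*(k+1) + o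
/-- value at spec k i -/
def vspec (k i : ℕ) : ℕ :=
  if i = 0 then k*k+1 else if i = 1 then k*k-k else if i = k then 1 else (k-1-i)*(k+1)+2
/-- value at runp k j o -/
def vrun (k j o : ℕ) : ℕ := if j = 0 then k*k+1+o else (k-1-j)*(k+1)+2+o

lemma mlt {m a b c d : ℕ} (hab : a < b) (h : c < m + d) : a*m + c < b*m + d := by
  have h1 : (a+1)*m ≤ b*m := Nat.mul_le_mul_right m hab
  have h2 : (a+1)*m = a*m + m := by ring
  omega

lemma mle {m a b c d : ℕ} (hab : a ≤ b) (h : c ≤ d) : a*m + c ≤ b*m + d := by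
  have h1 : a*m ≤ b*m := Nat.mul_le_mul_right m hab
  omega

lemma A1 (k : ℕ) (h : 1 ≤ k) : (k-1)*(k+1) + 1 = k*k := by
  obtain ⟨m, rfl⟩ := Nat.exists_eq_add_of_le h
  have e : 1 + m - 1 = m := by omega
  rw [e]; ring

lemma A2 (k : ℕ) (h : 2 ≤ k) : (k-2)*(k+1) + (k+2) = k*k := by
  obtain ⟨m, rfl⟩ := Nat.exists_eq_add_of_le h
  have e : 2 + m - 2 = m := by omega
  rw [e]; ring

lemma A3 (k : ℕ) (h : 3 ≤ k) : (k-3)*(k+1) + (2*k+3) = k*k := by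
  obtain ⟨m, rfl⟩ := Nat.exists_eq_add_of_le h
  have e : 3 + m - 3 = m := by omega
  rw [e]; ring

variable {k : ℕ}

lemma spec_lt_spec {i i' : ℕ} (h : i < i') : spec k i < spec k i' := by
  unfold spec
  rcases Nat.eq_zero_or_pos i with rfl | hi
  · rw [if_pos rfl, if_neg (by omega : ¬ i' = 0)]; omega
  · rw [if_neg (by omega), if_neg (by omega)]
    have := mle (m := k+1) (show i-1 ≤ i'-1 by omega) (le_refl 1)
    have h2 : i - 1 < i' - 1 := by omega
    have := mlt (m := k+1) h2 (show (1:ℕ) < (k+1)+1 by omega)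
    omega

lemma spec_inj {i i' : ℕ} (h : spec k i = spec k i') : i = i' := by
  rcases lt_trichotomy i i' with hl | he | hl
  · exact absurd h (Nat.ne_of_lt (spec_lt_spec hl))
  · exact he
  · exact absurd h.symm (Nat.ne_of_lt (spec_lt_spec hl))

lemma spec_lt_runp {i j o : ℕ} (hij : i ≤ j + 1) (ho : 1 ≤ o) :
    spec k i < runp k j o := by
  unfold spec runp
  rcases Nat.eq_zero_or_pos i with rfl | hi
  · rw [if_pos rfl]; split <;> omega
  · rw [if_neg (by omega)]
    rcases Nat.eq_zero_or_pos j with rfl | hj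
    · rw [if_pos rfl]
      have e : i - 1 = 0 := by omega
      rw [e]; omega
    · rw [if_neg (by omega)]
      have := mle (m := k+1) (show i-1 ≤ j by omega) (show (1:ℕ) ≤ o by omega)
      omega

lemma runp_lt_spec {i j o : ℕ} (hij : j + 2 ≤ i) (ho : o ≤ k) :
    runp k j o < spec k i := by
  unfold spec runp
  rw [if_neg (by omega : ¬ i = 0)]
  have h1 : (j+1)*(k+1) ≤ (i-1)*(k+1) := Nat.mul_le_mul_right _ (by omega)
  have h2 : (j+1)*(k+1) = j*(k+1) + (k+1) := by ring
  rcases Nat.eq_zero_or_pos j with rfl | hj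
  · rw [if_pos rfl]; omega
  · rw [if_neg (by omega)]; omega

lemma runp_lt_runp_same {j o o' : ℕ} (h : o < o') : runp k j o < runp k j o' := by
  unfold runp; split <;> omega

lemma runp_inj_o {j o o' : ℕ} (h : runp k j o = runp k j o') : o = o' := by
  rcases lt_trichotomy o o' with hl | he | hl
  · exact absurd h (Nat.ne_of_lt (runp_lt_runp_same hl))
  · exact he
  · exact absurd h.symm (Nat.ne_of_lt (runp_lt_runp_same hl))

lemma runp_lt_runp {j j' o o' : ℕ} (h : j < j') (ho : o ≤ k) (ho' : 1 ≤ o') :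
    runp k j o < runp k j' o' := by
  unfold runp
  rw [if_neg (by omega : ¬ j' = 0)]
  have h1 : (j+1)*(k+1) ≤ j'*(k+1) := Nat.mul_le_mul_right _ (by omega)
  have h2 : (j+1)*(k+1) = j*(k+1) + (k+1) := by ring
  rcases Nat.eq_zero_or_pos j with rfl | hj
  · rw [if_pos rfl]; omega
  · rw [if_neg (by omega)]; omega

lemma spec_ne_runp {i j o : ℕ} (ho : 1 ≤ o) (ho' : o ≤ k) :
    spec k i ≠ runp k j o := by
  rcases le_or_gt i (j+1) with hij | hij
  · exact Nat.ne_of_lt (spec_lt_runp hij ho)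
  · exact (Nat.ne_of_lt (runp_lt_spec (by omega) ho')).symm

lemma spec_lt_n (hk : 2 ≤ k) {i : ℕ} (hi : i ≤ k) : spec k i < k*k+k+1 := by
  unfold spec
  have h1 : (i-1)*(k+1) ≤ (k-1)*(k+1) := Nat.mul_le_mul_right _ (by omega)
  have h2 := A1 k (by omega)
  split <;> omega

lemma runp_lt_n (hk : 2 ≤ k) {j o : ℕ} (hj : j < k) (ho : o ≤ k) : runp k j o < k*k+k+1 := by
  unfold runp
  have h1 : j*(k+1) ≤ (k-1)*(k+1) := Nat.mul_le_mul_right _ (by omega)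
  have h2 := A1 k (by omega)
  split <;> omega


lemma vspec_zero : vspec k 0 = k*k+1 := by simp [vspec]
lemma vspec_one (hk : 2 ≤ k) : vspec k 1 = k*k-k := by
  unfold vspec; rw [if_neg (by omega), if_pos rfl]
lemma vspec_last (hk : 2 ≤ k) : vspec k k = 1 := by
  unfold vspec; rw [if_neg (by omega), if_neg (by omega), if_pos rfl]
lemma vspec_mid {i : ℕ} (h2 : 2 ≤ i) (h3 : i < k) : vspec k i = (k-1-i)*(k+1)+2 := by
  unfold vspec; rw [if_neg (by omega), if_neg (by omega), if_neg (by omega)]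
lemma vrun_zero {o : ℕ} : vrun k 0 o = k*k+1+o := by simp [vrun]
lemma vrun_pos {j o : ℕ} (h : 1 ≤ j) : vrun k j o = (k-1-j)*(k+1)+2+o := by
  unfold vrun; rw [if_neg (by omega)]

lemma kk_ge (hk : 2 ≤ k) : 2*k ≤ k*k := by
  calc 2*k ≤ k*k := Nat.mul_le_mul_right k hk

lemma vspec_lt_vspec (hk : 2 ≤ k) {i i' : ℕ} (h : i < i') (h' : i' ≤ k) :
    vspec k i' < vspec k i := by
  have hkk := kk_ge hk
  -- value of vspec i'
  rcases eq_or_ne i' k with rfl | hik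
  · rw [vspec_last hk]
    rcases Nat.eq_zero_or_pos i with rfl | hi
    · rw [vspec_zero]; omega
    · rcases eq_or_ne i 1 with rfl | hi1
      · rw [vspec_one hk]; omega
      · rw [vspec_mid (by omega) (by omega)]; omega
  · rcases eq_or_ne i' 1 with rfl | h1'
    · -- i = 0
      have : i = 0 := by omega
      subst this; rw [vspec_one hk, vspec_zero]; omega
    · -- 2 ≤ i' < k, so k ≥ 3
      have h2' : 2 ≤ i' := by omega
      have h3' : i' < k := by omega
      have hk3 : 3 ≤ k := by omega
      rw [vspec_mid h2' h3']
      have hb : (k-1-i')*(k+1) ≤ (k-3)*(k+1) := Nat.mul_le_mul_right _ (by omega)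
      have hA3 := A3 k hk3
      rcases Nat.eq_zero_or_pos i with rfl | hi
      · rw [vspec_zero]; omega
      · rcases eq_or_ne i 1 with rfl | hi1
        · rw [vspec_one hk]; omega
        · rw [vspec_mid (by omega) (by omega)]
          exact mlt (by omega) (by omega)

lemma vrun_lt_vrun_same {j o o' : ℕ} (h : o < o') : vrun k j o < vrun k j o' := by
  unfold vrun; split <;> omega

lemma vrun_lt_vrun (hk : 2 ≤ k) {j j' o o' : ℕ} (h : j < j') (hj' : j' < k)
    (ho : 1 ≤ o) (ho' : o' ≤ k) : vrun k j' o' < vrun k j o := by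
  rw [vrun_pos (by omega)]
  rcases Nat.eq_zero_or_pos j with rfl | hj
  · rw [vrun_zero]
    have hb : (k-1-j')*(k+1)+(2+o') ≤ (k-2)*(k+1)+(k+2) := mle (by omega) (by omega)
    have hA2 := A2 k hk
    omega
  · rw [vrun_pos hj]
    have : (k-1-j')*(k+1)+(2+o') < (k-1-j)*(k+1)+(2+o) :=
      mlt (by omega) (by omega)
    omega

lemma vspec_lt_vrun (hk : 2 ≤ k) {i j o : ℕ} (hji : j ≤ i) (hi : i ≤ k) (hj : j < k)
    (ho : 1 ≤ o) : vspec k i < vrun k j o := by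
  have hkk := kk_ge hk
  rcases eq_or_ne i k with rfl | hik
  · rw [vspec_last hk]
    rcases Nat.eq_zero_or_pos j with rfl | hjp
    · rw [vrun_zero]; omega
    · rw [vrun_pos hjp]; omega
  · rcases Nat.eq_zero_or_pos i with rfl | hi0
    · have : j = 0 := by omega
      subst this; rw [vspec_zero, vrun_zero]; omega
    · rcases eq_or_ne i 1 with rfl | hi1
      · rw [vspec_one hk]
        rcases Nat.eq_zero_or_pos j with rfl | hjp
        · rw [vrun_zero]; omega
        · have : j = 1 := by omega
          subst this; rw [vrun_pos le_rfl]
          have hA2 := A2 k hk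
          have e : k - 1 - 1 = k - 2 := by omega
          rw [e]; omega
      · rw [vspec_mid (by omega) (by omega)]
        rcases Nat.eq_zero_or_pos j with rfl | hjp
        · rw [vrun_zero]
          have hk3 : 3 ≤ k := by omega
          have hb : (k-1-i)*(k+1) ≤ (k-3)*(k+1) := Nat.mul_le_mul_right _ (by omega)
          have hA3 := A3 k hk3
          omega
        · rw [vrun_pos hjp]
          have : (k-1-i)*(k+1)+2 ≤ (k-1-j)*(k+1)+2 := mle (by omega) le_rfl
          omega

lemma vrun_lt_vspec (hk : 2 ≤ k) {i j o : ℕ} (hij : i + 1 ≤ j) (hj : j < k)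
    (ho : o ≤ k) : vrun k j o < vspec k i := by
  have hkk := kk_ge hk
  rw [vrun_pos (by omega)]
  rcases Nat.eq_zero_or_pos i with rfl | hi0
  · rw [vspec_zero]
    have hb : (k-1-j)*(k+1)+(2+o) ≤ (k-2)*(k+1)+(k+2) := mle (by omega) (by omega)
    have hA2 := A2 k hk
    omega
  · rcases eq_or_ne i 1 with rfl | hi1
    · rw [vspec_one hk]
      have hk3 : 3 ≤ k := by omega
      have hb : (k-1-j)*(k+1)+(2+o) ≤ (k-3)*(k+1)+(k+2) := mle (by omega) (by omega)
      have hA3 := A3 k hk3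
      omega
    · rw [vspec_mid (by omega) (by omega)]
      have : (k-1-j)*(k+1)+(2+o) < (k-1-i)*(k+1)+2 := mlt (by omega) (by omega)
      omega


lemma spec_one : spec k 1 = 1 := by unfold spec; norm_num

lemma sigma_spec (hk : 2 ≤ k) {i : ℕ} (hi : i ≤ k) :
    sigmaOne k (spec k i) = vspec k i := by
  have hp2 : k^2 = k*k := pow_two k
  rcases Nat.eq_zero_or_pos i with rfl | hi0
  · unfold spec sigmaOne vspec; simp; omega
  · rcases eq_or_ne i 1 with rfl | hi1
    · rw [spec_one]
      unfold sigmaOne vspec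
      rw [if_neg (by omega), if_pos rfl, if_neg (by omega), if_pos rfl]
      omega
    · -- 2 ≤ i ≤ k
      have hi2 : 2 ≤ i := by omega
      have hsp : spec k i = (i-1)*(k+1)+1 := by unfold spec; rw [if_neg (by omega)]
      rw [hsp]
      have e1 : (i-1)*(k+1) = (i-2)*(k+1) + (k+1) := by
        have e : i - 1 = (i-2)+1 := by omega
        rw [e]; ring
      have hple : (i-1)*(k+1)+1 - (k+2) = (i-2)*(k+1) := by omega
      have hdiv : (i-2)*(k+1) / (k+1) = i-2 := Nat.mul_div_cancel _ (by omega)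
      have hmod : (i-2)*(k+1) % (k+1) = 0 := Nat.mul_mod_left _ _
      simp only [sigmaOne]
      rw [if_neg (by omega), if_neg (by omega), if_neg (by omega), hple, hdiv, hmod,
        if_pos rfl]
      rcases eq_or_ne i k with rfl | hik
      · rw [if_pos (by omega), vspec]
        rw [if_neg (by omega), if_neg (by omega), if_pos rfl]
      · rw [if_neg (by omega), vspec,
          if_neg (by omega), if_neg (by omega), if_neg hik]
        have e2 : k - 1 - (i-2) - 2 = k - 1 - i := by omega
        rw [e2]
        omega

lemma sigma_run (hk : 2 ≤ k) {j o : ℕ} (hj : j < k) (ho1 : 1 ≤ o) (ho2 : o ≤ k) :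
    sigmaOne k (runp k j o) = vrun k j o := by
  have hp2 : k^2 = k*k := pow_two k
  rcases Nat.eq_zero_or_pos j with rfl | hj0
  · have hr : runp k 0 o = 1 + o := by unfold runp; rw [if_pos rfl]
    rw [hr]
    unfold sigmaOne vrun
    rw [if_neg (by omega), if_neg (by omega), if_pos (by omega), if_pos rfl]
    omega
  · have hr : runp k j o = 1 + j*(k+1) + o := by unfold runp; rw [if_neg (by omega)]
    rw [hr]
    have e1 : j*(k+1) = (j-1)*(k+1) + (k+1) := by
      have e : j = (j-1)+1 := by omega
      nth_rewrite 1 [e]; ring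
    have hple : 1 + j*(k+1) + o - (k+2) = o + (j-1)*(k+1) := by omega
    have hdiv : (o + (j-1)*(k+1)) / (k+1) = j-1 := by
      rw [Nat.add_mul_div_right _ _ (by omega : 0 < k+1), Nat.div_eq_of_lt (by omega)]
      omega
    have hmod : (o + (j-1)*(k+1)) % (k+1) = o := by
      rw [Nat.add_mul_mod_self_right, Nat.mod_eq_of_lt (by omega)]
    simp only [sigmaOne]
    rw [if_neg (by omega), if_neg (by omega), if_neg (by omega), hple, hdiv, hmod,
      if_neg (by omega)]
    have e2 : k - 1 - (j-1) = k - j := by omega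
    rw [e2]
    rcases eq_or_ne j (k-1) with rfl | hjk
    · rw [if_pos (by omega), vrun, if_neg (by omega)]
      have e3 : k - 1 - (k-1) = 0 := by omega
      rw [e3]; omega
    · rw [if_neg (by omega), vrun, if_neg (by omega)]
      have e3 : k - j - 1 = k - 1 - j := by omega
      rw [e3]

lemma classify (hk : 2 ≤ k) {p : ℕ} (hp : p < k*k+k+1) :
    (∃ i, i ≤ k ∧ p = spec k i) ∨
    (∃ j o, j < k ∧ 1 ≤ o ∧ o ≤ k ∧ p = runp k j o) := by
  rcases Nat.eq_zero_or_pos p with rfl | hp0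
  · exact Or.inl ⟨0, by omega, by unfold spec; rw [if_pos rfl]⟩
  · rcases eq_or_ne p 1 with rfl | hp1
    · exact Or.inl ⟨1, by omega, spec_one.symm⟩
    · rcases le_or_gt p (k+1) with hple | hpgt
      · refine Or.inr ⟨0, p-1, by omega, by omega, by omega, ?_⟩
        unfold runp; rw [if_pos rfl]; omega
      · obtain ⟨t, o, hom, hqe⟩ : ∃ t o, o < k+1 ∧ p - (k+2) = t*(k+1) + o :=
          ⟨(p-(k+2))/(k+1), (p-(k+2))%(k+1), Nat.mod_lt _ (by omega), by
            rw [mul_comm]; exact (Nat.div_add_mod _ _).symm⟩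
        have hA1 := A1 k (by omega)
        have htb : t ≤ k-2 := by
          by_contra hc
          have h1 : (k-1)*(k+1) ≤ t*(k+1) := Nat.mul_le_mul_right _ (by omega)
          omega
        rcases Nat.eq_zero_or_pos o with hoz | hop
        · refine Or.inl ⟨t+2, by omega, ?_⟩
          unfold spec; rw [if_neg (by omega)]
          have e : t+2-1 = t+1 := by omega
          rw [e]
          have e2 : (t+1)*(k+1) = t*(k+1) + (k+1) := by ring
          omega
        · refine Or.inr ⟨t+1, o, by omega, hop, by omega, ?_⟩
          unfold runp; rw [if_neg (by omega)]
          have e2 : (t+1)*(k+1) = t*(k+1) + (k+1) := by ring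
          omega


end SigmaOneAux

namespace SigmaOneAux
variable {k : ℕ}

lemma nn (k : ℕ) : k*k+k+1 = k^2+k+1 := by rw [pow_two]

def mkF (k x : ℕ) : Fin (k^2+k+1) := ⟨x % (k^2+k+1), Nat.mod_lt _ (by positivity)⟩

lemma mkF_val {x : ℕ} (h : x < k^2+k+1) : (mkF k x).val = x := Nat.mod_eq_of_lt h

lemma mkF_spec_val (hk : 2 ≤ k) {i : ℕ} (hi : i ≤ k) :
    (mkF k (spec k i)).val = spec k i :=
  mkF_val (by have h1 := spec_lt_n hk hi; have h2 := nn k; omega)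

lemma mkF_runp_val (hk : 2 ≤ k) {j o : ℕ} (hj : j < k) (ho : o ≤ k) :
    (mkF k (runp k j o)).val = runp k j o :=
  mkF_val (by have h1 := runp_lt_n hk hj ho; have h2 := nn k; omega)

def runF (k j : ℕ) : Finset (Fin (k^2+k+1)) :=
  (Finset.Icc 1 k).image (fun o => mkF k (runp k j o))

def incF (k j i : ℕ) : Finset (Fin (k^2+k+1)) := insert (mkF k (spec k i)) (runF k j)

def decF (k : ℕ) : Finset (Fin (k^2+k+1)) :=
  (Finset.range (k+1)).image (fun i => mkF k (spec k i))

lemma mem_runF {j : ℕ} {a : Fin (k^2+k+1)} :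
    a ∈ runF k j ↔ ∃ o, 1 ≤ o ∧ o ≤ k ∧ a = mkF k (runp k j o) := by
  simp [runF, Finset.mem_image, Finset.mem_Icc, eq_comm, and_assoc]

lemma card_runF (hk : 2 ≤ k) {j : ℕ} (hj : j < k) : (runF k j).card = k := by
  rw [runF, Finset.card_image_of_injOn, Nat.card_Icc]
  · omega
  · intro o ho o' ho' he
    simp only [Finset.coe_Icc, Set.mem_Icc] at ho ho'
    have h1 := mkF_runp_val hk hj ho.2
    have h2 := mkF_runp_val hk hj ho'.2
    have he' : (mkF k (runp k j o)).val = (mkF k (runp k j o')).val := congrArg Fin.val he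
    rw [h1, h2] at he'
    exact runp_inj_o he'

lemma spec_notMem_runF (hk : 2 ≤ k) {i j : ℕ} (hi : i ≤ k) (hj : j < k) :
    mkF k (spec k i) ∉ runF k j := by
  rw [mem_runF]
  rintro ⟨o, ho1, ho2, he⟩
  have h1 := mkF_spec_val hk hi
  have h2 := mkF_runp_val hk hj ho2
  exact spec_ne_runp ho1 ho2 (by rw [← h1, ← h2, he])

lemma card_incF (hk : 2 ≤ k) {j i : ℕ} (hj : j < k) (hi : i ≤ k) :
    (incF k j i).card = k + 1 := by
  rw [incF, Finset.card_insert_of_notMem (spec_notMem_runF hk hi hj), card_runF hk hj]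

lemma card_decF (hk : 2 ≤ k) : (decF k).card = k + 1 := by
  rw [decF, Finset.card_image_of_injOn, Finset.card_range]
  intro a ha b hb he
  simp only [Finset.coe_range, Set.mem_Iio] at ha hb
  have h1 := mkF_spec_val hk (show a ≤ k by omega)
  have h2 := mkF_spec_val hk (show b ≤ k by omega)
  have he' : (mkF k (spec k a)).val = (mkF k (spec k b)).val := congrArg Fin.val he
  rw [h1, h2] at he'
  exact spec_inj he'

lemma incF_mono (hk : 2 ≤ k) {j i : ℕ} (hj : j < k) (hji : j ≤ i) (hij : i ≤ j + 1) :
    StrictMonoOn (fun p : Fin (k^2+k+1) => sigmaOne k ↑p) ↑(incF k j i) := by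
  have hik : i ≤ k := by omega
  intro a ha b hb hab
  simp only [Finset.coe_insert, Set.mem_insert_iff, Finset.mem_coe, incF, mem_runF,
    Finset.mem_insert] at ha hb
  have hlt : a.val < b.val := hab
  rcases ha with rfl | ⟨o, ho1, ho2, rfl⟩ <;> rcases hb with rfl | ⟨o', ho1', ho2', rfl⟩
  · exact absurd rfl (ne_of_lt hab)
  · -- spec then run
    simp only
    rw [mkF_spec_val hk hik, mkF_runp_val hk hj ho2', sigma_spec hk hik,
      sigma_run hk hj ho1' ho2']
    exact vspec_lt_vrun hk hji hik hj ho1'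
  · -- run then spec : impossible by position
    rw [mkF_runp_val hk hj ho2, mkF_spec_val hk hik] at hlt
    have := spec_lt_runp (k := k) hij ho1
    omega
  · -- run then run
    rw [mkF_runp_val hk hj ho2, mkF_runp_val hk hj ho2'] at hlt
    have hoo : o < o' := by
      rcases lt_trichotomy o o' with h | h | h
      · exact h
      · subst h; omega
      · have := runp_lt_runp_same (k := k) (j := j) h; omega
    simp only
    rw [mkF_runp_val hk hj ho2, mkF_runp_val hk hj ho2', sigma_run hk hj ho1 ho2,
      sigma_run hk hj ho1' ho2']
    exact vrun_lt_vrun_same hoo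

lemma decF_anti (hk : 2 ≤ k) :
    StrictAntiOn (fun p : Fin (k^2+k+1) => sigmaOne k ↑p) ↑(decF k) := by
  intro a ha b hb hab
  simp only [decF, Finset.coe_image, Finset.coe_range, Set.mem_image, Set.mem_Iio] at ha hb
  obtain ⟨i, hi, rfl⟩ := ha
  obtain ⟨i', hi', rfl⟩ := hb
  have hik : i ≤ k := by omega
  have hik' : i' ≤ k := by omega
  have hlt : (mkF k (spec k i)).val < (mkF k (spec k i')).val := hab
  rw [mkF_spec_val hk hik, mkF_spec_val hk hik'] at hlt
  have hii : i < i' := by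
    rcases lt_trichotomy i i' with h | h | h
    · exact h
    · subst h; omega
    · have := spec_lt_spec (k := k) h; omega
  simp only
  rw [mkF_spec_val hk hik, mkF_spec_val hk hik', sigma_spec hk hik, sigma_spec hk hik']
  exact vspec_lt_vspec hk hii hik'

def isSpec (k : ℕ) (p : Fin (k^2+k+1)) : Prop := ∃ i, i ≤ k ∧ p.val = spec k i

instance {k : ℕ} : DecidablePred (isSpec k) := fun p =>
  decidable_of_iff (∃ i < k+1, (p : ℕ) = spec k i)
    (by constructor
        · rintro ⟨i, h1, h2⟩; exact ⟨i, by omega, h2⟩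
        · rintro ⟨i, h1, h2⟩; exact ⟨i, by omega, h2⟩)

lemma classifyF (hk : 2 ≤ k) (p : Fin (k^2+k+1)) :
    isSpec k p ∨ ∃ j o, j < k ∧ 1 ≤ o ∧ o ≤ k ∧ p.val = runp k j o := by
  have h2 := nn k
  have hp : p.val < k*k+k+1 := by have := p.isLt; omega
  exact classify hk hp

end SigmaOneAux

namespace SigmaOneAux
variable {k : ℕ}

lemma isSpec_iff {p : Fin (k^2+k+1)} : isSpec k p ↔ ∃ i, i ≤ k ∧ (p:ℕ) = spec k i := Iff.rfl

lemma classifyF' (hk : 2 ≤ k) (p : Fin (k^2+k+1)) :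
    (∃ i, i ≤ k ∧ (p:ℕ) = spec k i) ∨
    (∃ j o, j < k ∧ 1 ≤ o ∧ o ≤ k ∧ (p:ℕ) = runp k j o) := classifyF hk p

def hfun (k x : ℕ) : ℕ := if x = 0 then 0 else (x-1)/(k+1)+1

lemma hfun_spec {i : ℕ} (hi : i ≤ k) : hfun k (spec k i) = i := by
  rcases Nat.eq_zero_or_pos i with rfl | hi0
  · unfold spec hfun; rw [if_pos rfl, if_pos rfl]
  · have hsp : spec k i = (i-1)*(k+1)+1 := by unfold spec; rw [if_neg (by omega)]
    rw [hsp]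
    unfold hfun
    rw [if_neg (by omega)]
    have e : (i-1)*(k+1)+1-1 = (i-1)*(k+1) := by omega
    rw [e, Nat.mul_div_cancel _ (by omega : 0 < k+1)]
    omega

lemma hfun_run {j o : ℕ} (hj : j < k) (ho1 : 1 ≤ o) (ho2 : o ≤ k) :
    hfun k (runp k j o) = j + 1 := by
  rcases Nat.eq_zero_or_pos j with rfl | hj0
  · have hr : runp k 0 o = 1 + o := by unfold runp; rw [if_pos rfl]
    rw [hr]; unfold hfun
    rw [if_neg (by omega)]
    have e : 1+o-1 = o := by omega
    rw [e, Nat.div_eq_of_lt (by omega)]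
  · have hr : runp k j o = 1 + j*(k+1) + o := by unfold runp; rw [if_neg (by omega)]
    rw [hr]; unfold hfun
    rw [if_neg (by omega)]
    have e : 1 + j*(k+1) + o - 1 = o + j*(k+1) := by omega
    rw [e, Nat.add_mul_div_right _ _ (by omega : 0 < k+1), Nat.div_eq_of_lt (by omega)]
    omega

lemma inc_char (hk : 2 ≤ k) {s : Finset (Fin (k^2+k+1))}
    (hcard : s.card = k + 1)
    (hmono : StrictMonoOn (fun p : Fin (k^2+k+1) => sigmaOne k ↑p) ↑s) :
    ∃ j i, j < k ∧ j ≤ i ∧ i ≤ j + 1 ∧ s = incF k j i := by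
  have hmono' : ∀ a b : Fin (k^2+k+1), a ∈ s → b ∈ s → (a:ℕ) < (b:ℕ) →
      sigmaOne k ↑a < sigmaOne k ↑b := fun a b has hbs hab =>
    hmono (Finset.mem_coe.mpr has) (Finset.mem_coe.mpr hbs) (Fin.lt_def.mpr hab)
  set A := s.filter (isSpec k) with hA
  set B := s.filter (fun p => ¬ isSpec k p) with hB
  have hAB : A.card + B.card = s.card := Finset.card_filter_add_card_filter_not _
  have hAle : A.card ≤ 1 := by
    rw [Finset.card_le_one]
    intro a ha b hb
    rw [hA, Finset.mem_filter, isSpec_iff] at ha hb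
    obtain ⟨has, i, hi, hvi⟩ := ha
    obtain ⟨hbs, i', hi', hvi'⟩ := hb
    rcases lt_trichotomy i i' with h | h | h
    · exfalso
      have hpos : (a:ℕ) < (b:ℕ) := by have := spec_lt_spec (k := k) h; omega
      have h1 := hmono' a b has hbs hpos
      rw [hvi, hvi', sigma_spec hk hi, sigma_spec hk hi'] at h1
      have h2 := vspec_lt_vspec hk h hi'
      omega
    · exact Fin.ext (by rw [hvi, hvi', h])
    · exfalso
      have hpos : (b:ℕ) < (a:ℕ) := by have := spec_lt_spec (k := k) h; omega
      have h1 := hmono' b a hbs has hpos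
      rw [hvi, hvi', sigma_spec hk hi, sigma_spec hk hi'] at h1
      have h2 := vspec_lt_vspec hk h hi
      omega
  have hBrun : ∀ b ∈ B, ∃ j o, j < k ∧ 1 ≤ o ∧ o ≤ k ∧ (b:ℕ) = runp k j o := by
    intro b hb
    rw [hB, Finset.mem_filter] at hb
    rcases classifyF' hk b with hs | hr
    · exact absurd hs hb.2
    · exact hr
  have hBne : B.Nonempty := by
    rcases Finset.eq_empty_or_nonempty B with he | hne
    · exfalso; rw [he] at hAB; simp at hAB; omega
    · exact hne
  obtain ⟨b0, hb0⟩ := hBne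
  obtain ⟨j0, o0, hj0, ho01, ho02, hb0v⟩ := hBrun b0 hb0
  have hb0s : b0 ∈ s := (Finset.mem_filter.mp hb0).1
  have hBsub : B ⊆ runF k j0 := by
    intro b hb
    obtain ⟨j, o, hj, ho1, ho2, hbv⟩ := hBrun b hb
    have hbs : b ∈ s := (Finset.mem_filter.mp hb).1
    have hjj : j = j0 := by
      by_contra hne
      rcases lt_or_gt_of_ne hne with h | h
      · have hpos : (b:ℕ) < (b0:ℕ) := by
          have := runp_lt_runp (k := k) h ho2 ho01; omega
        have h1 := hmono' b b0 hbs hb0s hpos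
        rw [hbv, hb0v, sigma_run hk hj ho1 ho2, sigma_run hk hj0 ho01 ho02] at h1
        have h2 := vrun_lt_vrun hk h hj0 ho1 ho02
        omega
      · have hpos : (b0:ℕ) < (b:ℕ) := by
          have := runp_lt_runp (k := k) h ho02 ho1; omega
        have h1 := hmono' b0 b hb0s hbs hpos
        rw [hbv, hb0v, sigma_run hk hj ho1 ho2, sigma_run hk hj0 ho01 ho02] at h1
        have h2 := vrun_lt_vrun hk h hj ho01 ho2
        omega
    subst hjj
    rw [mem_runF]
    exact ⟨o, ho1, ho2, Fin.ext (by rw [mkF_runp_val hk hj ho2]; exact hbv)⟩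
  have hBcard : B.card ≤ k := by
    calc B.card ≤ (runF k j0).card := Finset.card_le_card hBsub
    _ = k := card_runF hk hj0
  have hAcard : A.card = 1 := by omega
  have hBeq : B = runF k j0 :=
    Finset.eq_of_subset_of_card_le hBsub (by rw [card_runF hk hj0]; omega)
  obtain ⟨a, hAa⟩ := Finset.card_eq_one.mp hAcard
  have haA : a ∈ A := by rw [hAa]; exact Finset.mem_singleton_self a
  have has : a ∈ s := (Finset.mem_filter.mp haA).1
  obtain ⟨i, hi, hav⟩ := isSpec_iff.mp (Finset.mem_filter.mp haA).2
  have hseq : s = incF k j0 i := by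
    have h1 : A ∪ B = s := Finset.filter_union_filter_not_eq _ s
    have h2 : a = mkF k (spec k i) := Fin.ext (by rw [mkF_spec_val hk hi]; exact hav)
    rw [incF, ← hBeq, ← h1, hAa, h2, Finset.insert_eq]
  have hrs : mkF k (runp k j0 1) ∈ s := by
    rw [hseq, incF]
    apply Finset.mem_insert_of_mem
    rw [mem_runF]
    exact ⟨1, le_rfl, by omega, rfl⟩
  have hrv : (mkF k (runp k j0 1)).val = runp k j0 1 := mkF_runp_val hk hj0 (by omega)
  have hji : j0 ≤ i := by
    by_contra hc
    have hpos : (a:ℕ) < runp k j0 1 := by rw [hav]; exact spec_lt_runp (by omega) le_rfl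
    have h1 := hmono' a (mkF k (runp k j0 1)) has hrs (by omega)
    rw [hav, hrv, sigma_spec hk hi, sigma_run hk hj0 le_rfl (by omega)] at h1
    have h2 := vrun_lt_vspec (i := i) (o := 1) hk (by omega) hj0 (by omega)
    omega
  have hij : i ≤ j0 + 1 := by
    by_contra hc
    have hpos : runp k j0 1 < (a:ℕ) := by rw [hav]; exact runp_lt_spec (by omega) (by omega)
    have h1 := hmono' (mkF k (runp k j0 1)) a hrs has (by omega)
    rw [hav, hrv, sigma_spec hk hi, sigma_run hk hj0 le_rfl (by omega)] at h1
    have h2 := vspec_lt_vrun (o := 1) hk (by omega) hi hj0 le_rfl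
    omega
  exact ⟨j0, i, hj0, hji, hij, hseq⟩

lemma dec_char (hk : 2 ≤ k) {s : Finset (Fin (k^2+k+1))}
    (hcard : s.card = k + 1)
    (hanti : StrictAntiOn (fun p : Fin (k^2+k+1) => sigmaOne k ↑p) ↑s) :
    s = decF k := by
  have hanti' : ∀ a b : Fin (k^2+k+1), a ∈ s → b ∈ s → (a:ℕ) < (b:ℕ) →
      sigmaOne k ↑b < sigmaOne k ↑a := fun a b has hbs hab =>
    hanti (Finset.mem_coe.mpr has) (Finset.mem_coe.mpr hbs) (Fin.lt_def.mpr hab)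
  have hkey : ∀ i j o (a b : Fin (k^2+k+1)), i ≤ k → j < k → 1 ≤ o → o ≤ k → j ≤ i → i ≤ j+1 →
      a ∈ s → b ∈ s → (a:ℕ) = spec k i → (b:ℕ) = runp k j o → False := by
    intro i j o a b hi hj ho1 ho2 hji hij has hbs hav hbv
    have hpos : (a:ℕ) < (b:ℕ) := by
      have := spec_lt_runp (k := k) hij ho1; omega
    have h1 := hanti' a b has hbs hpos
    rw [hav, hbv, sigma_spec hk hi, sigma_run hk hj ho1 ho2] at h1
    have h2 := vspec_lt_vrun hk hji hi hj ho1
    omega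
  have hinj : Set.InjOn (fun p : Fin (k^2+k+1) => hfun k ↑p) ↑s := by
    intro a ha b hb he
    have has : a ∈ s := Finset.mem_coe.mp ha
    have hbs : b ∈ s := Finset.mem_coe.mp hb
    have he' : hfun k (a:ℕ) = hfun k (b:ℕ) := he
    rcases classifyF' hk a with ⟨i, hi, hav⟩ | ⟨j, o, hj, ho1, ho2, hav⟩ <;>
      rcases classifyF' hk b with ⟨i', hi', hbv⟩ | ⟨j', o', hj', ho1', ho2', hbv⟩
    · rw [hav, hbv, hfun_spec hi, hfun_spec hi'] at he'
      exact Fin.ext (by rw [hav, hbv, he'])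
    · exfalso
      rw [hav, hbv, hfun_spec hi, hfun_run hj' ho1' ho2'] at he'
      exact hkey i j' o' a b hi hj' ho1' ho2' (by omega) (by omega) has hbs hav hbv
    · exfalso
      rw [hav, hbv, hfun_run hj ho1 ho2, hfun_spec hi'] at he'
      exact hkey i' j o b a hi' hj ho1 ho2 (by omega) (by omega) hbs has hbv hav
    · rw [hav, hbv, hfun_run hj ho1 ho2, hfun_run hj' ho1' ho2'] at he'
      have hjj : j = j' := by omega
      subst hjj
      rcases lt_trichotomy o o' with h | h | h
      · exfalso
        have hpos : (a:ℕ) < (b:ℕ) := by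
          have := runp_lt_runp_same (k := k) (j := j) h; omega
        have h1 := hanti' a b has hbs hpos
        rw [hav, hbv, sigma_run hk hj ho1 ho2, sigma_run hk hj ho1' ho2'] at h1
        have h2 := vrun_lt_vrun_same (k := k) (j := j) h
        omega
      · exact Fin.ext (by rw [hav, hbv, h])
      · exfalso
        have hpos : (b:ℕ) < (a:ℕ) := by
          have := runp_lt_runp_same (k := k) (j := j) h; omega
        have h1 := hanti' b a hbs has hpos
        rw [hav, hbv, sigma_run hk hj ho1 ho2, sigma_run hk hj ho1' ho2'] at h1
        have h2 := vrun_lt_vrun_same (k := k) (j := j) h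
        omega
  have himg : Finset.image (fun p : Fin (k^2+k+1) => hfun k ↑p) s = Finset.range (k+1) := by
    apply Finset.eq_of_subset_of_card_le
    · intro x hx
      obtain ⟨p, hp, rfl⟩ := Finset.mem_image.mp hx
      rw [Finset.mem_range]
      rcases classifyF' hk p with ⟨i, hi, hpv⟩ | ⟨j, o, hj, ho1, ho2, hpv⟩
      · rw [hpv, hfun_spec hi]; omega
      · rw [hpv, hfun_run hj ho1 ho2]; omega
    · rw [Finset.card_range, Finset.card_image_of_injOn hinj, hcard]
  have hnorun : ∀ j, j < k → ∀ p ∈ s, ∀ o, 1 ≤ o → o ≤ k → (p:ℕ) = runp k j o → False := by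
    intro j
    induction j using Nat.strong_induction_on with
    | _ j ih =>
      intro hj p hp o ho1 ho2 hpv
      have hjmem : j ∈ Finset.image (fun p : Fin (k^2+k+1) => hfun k ↑p) s := by
        rw [himg, Finset.mem_range]; omega
      obtain ⟨q, hq, hqv⟩ := Finset.mem_image.mp hjmem
      have hqv' : hfun k (q:ℕ) = j := hqv
      rcases classifyF' hk q with ⟨i, hi, hqs⟩ | ⟨j', o', hj', ho1', ho2', hqr⟩
      · rw [hqs, hfun_spec hi] at hqv'
        subst hqv'
        exact hkey i i o q p hi hj ho1 ho2 le_rfl (by omega) hq hp hqs hpv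
      · rw [hqr, hfun_run hj' ho1' ho2'] at hqv'
        exact ih j' (by omega) (by omega) q hq o' ho1' ho2' hqr
  have hsub : s ⊆ decF k := by
    intro p hp
    rcases classifyF' hk p with ⟨i, hi, hpv⟩ | ⟨j, o, hj, ho1, ho2, hpv⟩
    · rw [decF, Finset.mem_image]
      exact ⟨i, Finset.mem_range.mpr (by omega),
        Fin.ext (by rw [mkF_spec_val hk hi]; exact hpv.symm)⟩
    · exact absurd hpv (fun h => hnorun j hj p hp o ho1 ho2 h)
  exact Finset.eq_of_subset_of_card_le hsub (by rw [card_decF hk, hcard])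

end SigmaOneAux

namespace SigmaOneAux
variable {k : ℕ}

lemma incF_inj (hk : 2 ≤ k) {j i j' i' : ℕ} (hj : j < k) (hji : j ≤ i) (hij : i ≤ j+1)
    (hj' : j' < k) (hji' : j' ≤ i') (hij' : i' ≤ j'+1)
    (he : incF k j i = incF k j' i') : j = j' ∧ i = i' := by
  have hi : i ≤ k := by omega
  have hi' : i' ≤ k := by omega
  have hr : mkF k (runp k j 1) ∈ incF k j' i' := by
    rw [← he, incF]
    apply Finset.mem_insert_of_mem
    rw [mem_runF]
    exact ⟨1, le_rfl, by omega, rfl⟩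
  have hjj : j = j' := by
    rw [incF, Finset.mem_insert, mem_runF] at hr
    rcases hr with h | ⟨o, ho1, ho2, h⟩
    · exfalso
      have hv := congrArg Fin.val h
      rw [mkF_runp_val hk hj (by omega), mkF_spec_val hk hi'] at hv
      exact spec_ne_runp (k := k) le_rfl (by omega) hv.symm
    · have hv := congrArg Fin.val h
      rw [mkF_runp_val hk hj (by omega), mkF_runp_val hk hj' ho2] at hv
      by_contra hne
      rcases lt_or_gt_of_ne hne with hlt | hlt
      · have := runp_lt_runp (k := k) (o := 1) (o' := o) hlt (by omega) ho1
        omega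
      · have := runp_lt_runp (k := k) (o := o) (o' := 1) hlt ho2 le_rfl
        omega
  subst hjj
  refine ⟨rfl, ?_⟩
  have hs : mkF k (spec k i) ∈ incF k j i' := by rw [← he, incF]; exact Finset.mem_insert_self _ _
  rw [incF, Finset.mem_insert, mem_runF] at hs
  rcases hs with h | ⟨o, ho1, ho2, h⟩
  · have hv := congrArg Fin.val h
    rw [mkF_spec_val hk hi, mkF_spec_val hk hi'] at hv
    exact spec_inj hv
  · exfalso
    have hv := congrArg Fin.val h
    rw [mkF_spec_val hk hi, mkF_runp_val hk hj ho2] at hv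
    exact spec_ne_runp ho1 ho2 hv

lemma not_both (hk : 2 ≤ k) {s : Finset (Fin (k^2+k+1))} (hc : s.card = k+1)
    (hm : StrictMonoOn (fun p : Fin (k^2+k+1) => sigmaOne k ↑p) ↑s)
    (ha : StrictAntiOn (fun p : Fin (k^2+k+1) => sigmaOne k ↑p) ↑s) : False := by
  have h2 : 1 < s.card := by omega
  obtain ⟨a, has, b, hbs, hne⟩ := Finset.one_lt_card.mp h2
  rcases lt_or_gt_of_ne hne with h | h
  · have h1 : sigmaOne k ↑a < sigmaOne k ↑b :=
      hm (Finset.mem_coe.mpr has) (Finset.mem_coe.mpr hbs) h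
    have h2 : sigmaOne k ↑b < sigmaOne k ↑a :=
      ha (Finset.mem_coe.mpr has) (Finset.mem_coe.mpr hbs) h
    omega
  · have h1 : sigmaOne k ↑b < sigmaOne k ↑a :=
      hm (Finset.mem_coe.mpr hbs) (Finset.mem_coe.mpr has) h
    have h2 : sigmaOne k ↑a < sigmaOne k ↑b :=
      ha (Finset.mem_coe.mpr hbs) (Finset.mem_coe.mpr has) h
    omega

end SigmaOneAux

open SigmaOneAux in
theorem stmt_19' (k : ℕ) (hk : 2 ≤ k) :
    Set.ncard {s : Finset (Fin (k ^ 2 + k + 1)) | s.card = k + 1 ∧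
        StrictMonoOn (fun p : Fin (k ^ 2 + k + 1) => sigmaOne k p)
          (↑s : Set (Fin (k ^ 2 + k + 1)))} = 2 * k ∧
    Set.ncard {s : Finset (Fin (k ^ 2 + k + 1)) | s.card = k + 1 ∧
        StrictAntiOn (fun p : Fin (k ^ 2 + k + 1) => sigmaOne k p)
          (↑s : Set (Fin (k ^ 2 + k + 1)))} = 1 ∧
    Set.ncard {s : Finset (Fin (k ^ 2 + k + 1)) | s.card = k + 1 ∧
        (StrictMonoOn (fun p : Fin (k ^ 2 + k + 1) => sigmaOne k p)
            (↑s : Set (Fin (k ^ 2 + k + 1))) ∨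
          StrictAntiOn (fun p : Fin (k ^ 2 + k + 1) => sigmaOne k p)
            (↑s : Set (Fin (k ^ 2 + k + 1))))} = 2 * k + 1 := by
  set F1 : Finset (Finset (Fin (k^2+k+1))) :=
    (Finset.range k ×ˢ Finset.range 2).image (fun q => incF k q.1 (q.1+q.2)) with hF1
  have hmem1 : ∀ s : Finset (Fin (k^2+k+1)),
      (s.card = k+1 ∧ StrictMonoOn (fun p : Fin (k^2+k+1) => sigmaOne k ↑p) ↑s) ↔ s ∈ F1 := by
    intro s
    constructor
    · rintro ⟨hc, hm⟩
      obtain ⟨j, i, hj, hji, hij, hseq⟩ := inc_char hk hc hm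
      rw [hF1, Finset.mem_image]
      refine ⟨(j, i-j), ?_, ?_⟩
      · rw [Finset.mem_product, Finset.mem_range, Finset.mem_range]
        constructor <;> omega
      · simp only
        rw [hseq]
        congr 1
        omega
    · intro hs
      rw [hF1, Finset.mem_image] at hs
      obtain ⟨⟨j, e⟩, hmem, rfl⟩ := hs
      rw [Finset.mem_product, Finset.mem_range, Finset.mem_range] at hmem
      exact ⟨card_incF hk hmem.1 (by omega),
        incF_mono hk hmem.1 (by omega) (by omega)⟩
  have hcard1 : F1.card = 2*k := by
    have hinj : Set.InjOn (fun q : ℕ × ℕ => incF k q.1 (q.1+q.2))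
        ↑(Finset.range k ×ˢ Finset.range 2) := by
      intro q hq q' hq' he
      simp only [Finset.coe_product, Set.mem_prod, Finset.mem_coe, Finset.mem_range] at hq hq'
      obtain ⟨h1, h2⟩ := incF_inj hk hq.1 (by omega) (by omega) hq'.1 (by omega) (by omega) he
      exact Prod.ext h1 (by omega)
    rw [hF1, Finset.card_image_of_injOn hinj, Finset.card_product, Finset.card_range,
      Finset.card_range]
    ring
  have hmem2 : ∀ s : Finset (Fin (k^2+k+1)),
      (s.card = k+1 ∧ StrictAntiOn (fun p : Fin (k^2+k+1) => sigmaOne k ↑p) ↑s) ↔ s = decF k := by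
    intro s
    constructor
    · rintro ⟨hc, ha⟩
      exact dec_char hk hc ha
    · rintro rfl
      exact ⟨card_decF hk, decF_anti hk⟩
  have hset1 : {s : Finset (Fin (k ^ 2 + k + 1)) | s.card = k + 1 ∧
      StrictMonoOn (fun p : Fin (k ^ 2 + k + 1) => sigmaOne k p)
        (↑s : Set (Fin (k ^ 2 + k + 1)))} = ↑F1 := by
    ext s
    rw [Set.mem_setOf_eq, Finset.mem_coe]
    exact hmem1 s
  have hset2 : {s : Finset (Fin (k ^ 2 + k + 1)) | s.card = k + 1 ∧
      StrictAntiOn (fun p : Fin (k ^ 2 + k + 1) => sigmaOne k p)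
        (↑s : Set (Fin (k ^ 2 + k + 1)))} = {decF k} := by
    ext s
    rw [Set.mem_setOf_eq, Set.mem_singleton_iff]
    exact hmem2 s
  have hset3 : {s : Finset (Fin (k ^ 2 + k + 1)) | s.card = k + 1 ∧
      (StrictMonoOn (fun p : Fin (k ^ 2 + k + 1) => sigmaOne k p)
          (↑s : Set (Fin (k ^ 2 + k + 1))) ∨
        StrictAntiOn (fun p : Fin (k ^ 2 + k + 1) => sigmaOne k p)
          (↑s : Set (Fin (k ^ 2 + k + 1))))} = ↑F1 ∪ {decF k} := by
    ext s
    rw [Set.mem_setOf_eq, Set.mem_union, Finset.mem_coe, Set.mem_singleton_iff]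
    constructor
    · rintro ⟨hc, hm | ha⟩
      · exact Or.inl ((hmem1 s).mp ⟨hc, hm⟩)
      · exact Or.inr ((hmem2 s).mp ⟨hc, ha⟩)
    · rintro (h | h)
      · obtain ⟨hc, hm⟩ := (hmem1 s).mpr h
        exact ⟨hc, Or.inl hm⟩
      · obtain ⟨hc, ha⟩ := (hmem2 s).mpr h
        exact ⟨hc, Or.inr ha⟩
  have hdisj : Disjoint (↑F1 : Set (Finset (Fin (k^2+k+1)))) {decF k} := by
    rw [Set.disjoint_left]
    intro s h1 h2
    rw [Set.mem_singleton_iff] at h2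
    obtain ⟨hc, hm⟩ := (hmem1 s).mpr (Finset.mem_coe.mp h1)
    obtain ⟨-, ha⟩ := (hmem2 s).mpr h2
    exact not_both hk hc hm ha
  refine ⟨?_, ?_, ?_⟩
  · rw [hset1, Set.ncard_coe_finset, hcard1]
  · rw [hset2, Set.ncard_singleton]
  · rw [hset3, Set.ncard_union_eq hdisj (F1.finite_toSet) (Set.finite_singleton _),
      Set.ncard_coe_finset, hcard1, Set.ncard_singleton]

/-- For `n = k²+k+1`, the permutation `σ_k^1` contains exactly `2k` increasing
subsequences of length `k+1` and exactly one decreasing subsequence of length `k+1`;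
in particular `m_k(σ_k^1) = 2k+1`, with monotone `(k+1)`-subsequences of both types. -/
theorem stmt_19 (k : ℕ) (hk : 2 ≤ k) :
    Set.ncard {s : Finset (Fin (k ^ 2 + k + 1)) | s.card = k + 1 ∧
        StrictMonoOn (fun p : Fin (k ^ 2 + k + 1) => sigmaOne k p)
          (↑s : Set (Fin (k ^ 2 + k + 1)))} = 2 * k ∧
    Set.ncard {s : Finset (Fin (k ^ 2 + k + 1)) | s.card = k + 1 ∧
        StrictAntiOn (fun p : Fin (k ^ 2 + k + 1) => sigmaOne k p)
          (↑s : Set (Fin (k ^ 2 + k + 1)))} = 1 ∧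
    Set.ncard {s : Finset (Fin (k ^ 2 + k + 1)) | s.card = k + 1 ∧
        (StrictMonoOn (fun p : Fin (k ^ 2 + k + 1) => sigmaOne k p)
            (↑s : Set (Fin (k ^ 2 + k + 1))) ∨
          StrictAntiOn (fun p : Fin (k ^ 2 + k + 1) => sigmaOne k p)
            (↑s : Set (Fin (k ^ 2 + k + 1))))} = 2 * k + 1 := stmt_19' k hk
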